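/- Every phase carrier U ∈ SU(4) can be written as U = c · (Z_s ⊗ Z_t) · CPHASE(x) · Q, where c is a complex number of modulus 1, s, t, x ∈ ℝ, and Q is one of the eight permutation matrices of the form P or SWAP · P with P ∈ {I ⊗ I, I ⊗ X, X ⊗ I, X ⊗ X} (here I is the 2×2 identity and X = [[0,1],[1,0]]). In particular, every phase carrier is locally equivalent to CPHASE(x) or to SWAP · CPHASE(x) for some x ∈ ℝ. -/

import Mathlib

open Complex Matrix Kronecker

noncomputable def Zgate (θ : ℝ) : Matrix (Fin 2) (Fin 2) ℂ :=
  !![exp (θ / 2 * I), 0; 0, exp (-(θ / 2) * I)]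

/-- The Pauli X matrix. -/
def Xmat : Matrix (Fin 2) (Fin 2) ℂ := !![0, 1; 1, 0]

/-- The SWAP gate, with basis ordered as (0,0), (0,1), (1,0), (1,1). -/
def SWAP : Matrix (Fin 2 × Fin 2) (Fin 2 × Fin 2) ℂ :=
  fun p q => if p = (q.2, q.1) then 1 else 0

/-- The CPHASE(x) gate, diag(1, 1, 1, e^{ix}). -/
noncomputable def CPHASE (x : ℝ) : Matrix (Fin 2 × Fin 2) (Fin 2 × Fin 2) ℂ :=
  fun p q => if p = q then (if p = (1, 1) then exp (x * I) else 1) else 0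

/-- A two-qubit gate is a phase carrier if `Z` rotations can be carried across it. -/
def IsPhaseCarrier (U : Matrix (Fin 2 × Fin 2) (Fin 2 × Fin 2) ℂ) : Prop :=
  ∀ θ₀ θ₁ : ℝ, ∃ φ₀ φ₁ : ℝ, U * (Zgate θ₀ ⊗ₖ Zgate θ₁) = (Zgate φ₀ ⊗ₖ Zgate φ₁) * U

/-! ### Auxiliary definitions and lemmas -/

abbrev F4 := Fin 2 × Fin 2

noncomputable def gf (θ : ℝ) : Fin 2 → ℂ := ![exp (θ / 2 * I), exp (-(θ / 2) * I)]

def cmpl (p : F4) : F4 := (p.1 + 1, p.2 + 1)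

/-- The set of eight allowed permutation matrices. -/
noncomputable def QSet : Set (Matrix F4 F4 ℂ) :=
  {(1 : Matrix (Fin 2) (Fin 2) ℂ) ⊗ₖ (1 : Matrix (Fin 2) (Fin 2) ℂ),
    (1 : Matrix (Fin 2) (Fin 2) ℂ) ⊗ₖ Xmat,
    Xmat ⊗ₖ (1 : Matrix (Fin 2) (Fin 2) ℂ), Xmat ⊗ₖ Xmat,
    SWAP * ((1 : Matrix (Fin 2) (Fin 2) ℂ) ⊗ₖ (1 : Matrix (Fin 2) (Fin 2) ℂ)),
    SWAP * ((1 : Matrix (Fin 2) (Fin 2) ℂ) ⊗ₖ Xmat),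
    SWAP * (Xmat ⊗ₖ (1 : Matrix (Fin 2) (Fin 2) ℂ)),
    SWAP * (Xmat ⊗ₖ Xmat)}

lemma Zgate_eq_diagonal (θ : ℝ) : Zgate θ = Matrix.diagonal (gf θ) := by
  ext i j; fin_cases i <;> fin_cases j <;> simp [Zgate, gf, Matrix.diagonal]

lemma kron_diag (θ₀ θ₁ : ℝ) :
    Zgate θ₀ ⊗ₖ Zgate θ₁ = Matrix.diagonal (fun q : F4 => gf θ₀ q.1 * gf θ₁ q.2) := by
  rw [Zgate_eq_diagonal, Zgate_eq_diagonal, Matrix.diagonal_kronecker_diagonal]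

lemma CPHASE_diag (x : ℝ) :
    CPHASE x = Matrix.diagonal (fun p : F4 => if p = (1,1) then exp (x * I) else 1) := by
  ext p q
  by_cases h : p = q <;> simp [CPHASE, Matrix.diagonal, h]

lemma gf_pi : gf Real.pi = ![I, -I] := by
  funext i
  fin_cases i
  · show exp ((Real.pi : ℂ) / 2 * I) = I
    rw [show ((Real.pi : ℂ) / 2) = ((Real.pi / 2 : ℝ) : ℂ) by push_cast; ring,
      Complex.exp_mul_I, ← Complex.ofReal_cos, ← Complex.ofReal_sin]
    simp
  · show exp (-((Real.pi : ℂ) / 2) * I) = -I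
    rw [show (-((Real.pi : ℂ) / 2)) = ((-(Real.pi / 2) : ℝ) : ℂ) by push_cast; ring,
      Complex.exp_mul_I, ← Complex.ofReal_cos, ← Complex.ofReal_sin]
    simp

lemma gf_zero (i : Fin 2) : gf 0 i = 1 := by fin_cases i <;> simp [gf]

lemma gf_mul (θ : ℝ) : gf θ 0 * gf θ 1 = 1 := by
  simp [gf, ← Complex.exp_add]

lemma I_ne_neg_I : (I : ℂ) ≠ -I := by
  intro h
  have := congrArg Complex.im h
  norm_num at this

lemma gf_pi_inj {i j : Fin 2} (h : gf Real.pi i = gf Real.pi j) : i = j := by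
  fin_cases i <;> fin_cases j <;> rw [gf_pi] at h <;> simp_all <;>
    first
      | exact I_ne_neg_I h
      | exact I_ne_neg_I h.symm

noncomputable def dvπ (q : F4) : ℂ := gf Real.pi q.1 * gf Real.pi q.2

lemma dv_pair (a b : F4) (h : dvπ a * dvπ b = 1) (hne : a ≠ b) : b = cmpl a := by
  fin_cases a <;> fin_cases b <;>
    simp_all [dvπ, gf_pi, cmpl, Complex.I_mul_I] <;>
    norm_num [Complex.ext_iff] at h

lemma exists_perm (U : Matrix F4 F4 ℂ) (hUu : U ∈ Matrix.unitaryGroup F4 ℂ)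
    (hpc : IsPhaseCarrier U) :
    ∃ f : F4 → F4, Function.Injective f ∧ (∀ p q, q ≠ f p → U p q = 0) ∧
      (∀ p, ‖U p (f p)‖ = 1) ∧
      f (1,1) = cmpl (f (0,0)) ∧ f (1,0) = cmpl (f (0,1)) := by
  have key : ∀ θ₀ θ₁ : ℝ, ∃ φ₀ φ₁ : ℝ, ∀ p q : F4, U p q ≠ 0 →
      gf θ₀ q.1 * gf θ₁ q.2 = gf φ₀ p.1 * gf φ₁ p.2 := by
    intro θ₀ θ₁
    obtain ⟨φ₀, φ₁, h⟩ := hpc θ₀ θ₁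
    rw [kron_diag, kron_diag] at h
    refine ⟨φ₀, φ₁, fun p q hne => ?_⟩
    have h2 := congrFun (congrFun h p) q
    rw [Matrix.mul_diagonal, Matrix.diagonal_mul] at h2
    exact mul_left_cancel₀ hne (h2.trans (mul_comm _ _))
  have hrow : ∀ (p q q' : F4), U p q ≠ 0 → U p q' ≠ 0 → q = q' := by
    rintro p ⟨q1, q2⟩ ⟨q1', q2'⟩ h1 h2
    by_contra hne
    have hd : q1 ≠ q1' ∨ q2 ≠ q2' := by
      by_contra hc
      push_neg at hc
      exact hne (by rw [hc.1, hc.2])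
    rcases hd with hd | hd
    · obtain ⟨φ₀, φ₁, hk⟩ := key Real.pi 0
      have e1 := hk p (q1, q2) h1
      have e2 := hk p (q1', q2') h2
      simp only [gf_zero, mul_one] at e1 e2
      exact hd (gf_pi_inj (e1.trans e2.symm))
    · obtain ⟨φ₀, φ₁, hk⟩ := key 0 Real.pi
      have e1 := hk p (q1, q2) h1
      have e2 := hk p (q1', q2') h2
      simp only [gf_zero, one_mul] at e1 e2
      exact hd (gf_pi_inj (e1.trans e2.symm))
  have hUU : U * star U = 1 := Matrix.mem_unitaryGroup_iff.mp hUu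
  have hrow_ex : ∀ p : F4, ∃ q, U p q ≠ 0 := by
    intro p
    by_contra hc
    push_neg at hc
    have h2 := congrFun (congrFun hUU p) p
    rw [Matrix.mul_apply] at h2
    simp [hc, Matrix.one_apply] at h2
  choose f hf using hrow_ex
  have h0 : ∀ p q, q ≠ f p → U p q = 0 := by
    intro p q hq
    by_contra hc
    exact hq (hrow p q (f p) hc (hf p))
  have hsingle : ∀ p p' : F4, (U * star U) p p' = U p (f p) * star (U p' (f p)) := by
    intro p p'
    rw [Matrix.mul_apply]
    rw [Finset.sum_eq_single (f p)]
    · rfl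
    · intro b _ hb
      rw [h0 p b hb, zero_mul]
    · intro hb
      exact absurd (Finset.mem_univ _) hb
  have habs : ∀ p, ‖U p (f p)‖ = 1 := by
    intro p
    have h2 := hsingle p p
    rw [hUU, Matrix.one_apply_eq] at h2
    have h5 : U p (f p) * star (U p (f p)) = (Complex.normSq (U p (f p)) : ℂ) :=
      Complex.mul_conj _
    rw [h5] at h2
    have h6 : Complex.normSq (U p (f p)) = 1 := by
      exact_mod_cast h2.symm
    rw [Complex.norm_def, h6, Real.sqrt_one]
  have hinj : Function.Injective f := by
    intro p p' hfe
    by_contra hne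
    have h2 := hsingle p p'
    rw [hUU, Matrix.one_apply_ne hne] at h2
    have hp : U p (f p) ≠ 0 := hf p
    have hp' : U p' (f p) ≠ 0 := by rw [hfe]; exact hf p'
    exact hp (by
      rcases mul_eq_zero.mp h2.symm with h | h
      · exact h
      · exact absurd (star_eq_zero.mp h) hp')
  obtain ⟨φ₀, φ₁, hk⟩ := key Real.pi Real.pi
  have e00 := hk (0,0) (f (0,0)) (hf _)
  have e01 := hk (0,1) (f (0,1)) (hf _)
  have e10 := hk (1,0) (f (1,0)) (hf _)
  have e11 := hk (1,1) (f (1,1)) (hf _)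
  have P1 : dvπ (f (0,0)) * dvπ (f (1,1)) = 1 := by
    show (gf Real.pi (f (0,0)).1 * gf Real.pi (f (0,0)).2) *
      (gf Real.pi (f (1,1)).1 * gf Real.pi (f (1,1)).2) = 1
    rw [e00, e11]
    calc (gf φ₀ (0:Fin 2) * gf φ₁ (0:Fin 2)) * (gf φ₀ (1:Fin 2) * gf φ₁ (1:Fin 2))
        = (gf φ₀ 0 * gf φ₀ 1) * (gf φ₁ 0 * gf φ₁ 1) := by ring
      _ = 1 := by rw [gf_mul, gf_mul, one_mul]
  have P2 : dvπ (f (0,1)) * dvπ (f (1,0)) = 1 := by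
    show (gf Real.pi (f (0,1)).1 * gf Real.pi (f (0,1)).2) *
      (gf Real.pi (f (1,0)).1 * gf Real.pi (f (1,0)).2) = 1
    rw [e01, e10]
    calc (gf φ₀ (0:Fin 2) * gf φ₁ (1:Fin 2)) * (gf φ₀ (1:Fin 2) * gf φ₁ (0:Fin 2))
        = (gf φ₀ 0 * gf φ₀ 1) * (gf φ₁ 0 * gf φ₁ 1) := by ring
      _ = 1 := by rw [gf_mul, gf_mul, one_mul]
  exact ⟨f, hinj, h0, habs,
    dv_pair _ _ P1 (fun h => absurd (hinj h.symm) (by decide)),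
    dv_pair _ _ P2 (fun h => absurd (hinj h.symm) (by decide))⟩

lemma exp_arg (z : ℂ) (hz : ‖z‖ = 1) : exp ((Complex.arg z : ℂ) * I) = z := by
  have := Complex.norm_mul_exp_arg_mul_I z
  rwa [hz, Complex.ofReal_one, one_mul] at this

lemma diag_factor (u : F4 → ℂ) (hu : ∀ p, ‖u p‖ = 1) :
    ∃ (c : ℂ) (s t x : ℝ), ‖c‖ = 1 ∧
      Matrix.diagonal u = c • ((Zgate s ⊗ₖ Zgate t) * CPHASE x) := by
  have hn : ∀ p, u p * (starRingEnd ℂ) (u p) = 1 := by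
    intro p
    rw [Complex.mul_conj, Complex.normSq_eq_norm_sq, hu]
    norm_num
  have habs_conj : ∀ p q : F4, ‖u p * (starRingEnd ℂ) (u q)‖ = 1 := by
    intro p q
    rw [norm_mul, Complex.norm_conj, hu, hu, one_mul]
  set s := Complex.arg (u (0,0) * (starRingEnd ℂ) (u (1,0))) with hs
  set t := Complex.arg (u (0,0) * (starRingEnd ℂ) (u (0,1))) with ht
  set a := exp ((s:ℂ)/2 * I) with ha
  set a' := exp (-((s:ℂ)/2) * I) with ha'
  set b := exp ((t:ℂ)/2 * I) with hb
  set b' := exp (-((t:ℂ)/2) * I) with hb'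
  have haa' : a * a' = 1 := by rw [ha, ha', ← Complex.exp_add, ← Complex.exp_zero]; congr 1; ring
  have hbb' : b * b' = 1 := by rw [hb, hb', ← Complex.exp_add, ← Complex.exp_zero]; congr 1; ring
  have ea : a * a = u (0,0) * (starRingEnd ℂ) (u (1,0)) := by
    rw [ha, ← Complex.exp_add, show (s:ℂ)/2*I + (s:ℂ)/2*I = (s:ℂ)*I by ring]
    exact exp_arg _ (habs_conj _ _)
  have eb : b * b = u (0,0) * (starRingEnd ℂ) (u (0,1)) := by
    rw [hb, ← Complex.exp_add, show (t:ℂ)/2*I + (t:ℂ)/2*I = (t:ℂ)*I by ring]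
    exact exp_arg _ (habs_conj _ _)
  set x := Complex.arg (u (1,1) * (starRingEnd ℂ) (u (0,0)) * ((a*a) * (b*b))) with hx
  have habsx : ‖u (1,1) * (starRingEnd ℂ) (u (0,0)) * ((a*a) * (b*b))‖ = 1 := by
    rw [norm_mul, habs_conj, one_mul, norm_mul, norm_mul, norm_mul,
      ha, hb]
    rw [show ((s:ℂ)/2*I) = ((s/2 : ℝ) : ℂ) * I by push_cast; ring,
      show ((t:ℂ)/2*I) = ((t/2 : ℝ) : ℂ) * I by push_cast; ring,
      Complex.norm_exp_ofReal_mul_I, Complex.norm_exp_ofReal_mul_I]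
    norm_num
  have ex : exp ((x:ℂ) * I) = u (1,1) * (starRingEnd ℂ) (u (0,0)) * ((a*a) * (b*b)) :=
    exp_arg _ habsx
  set c := u (0,0) * (a' * b') with hc
  have hcabs : ‖c‖ = 1 := by
    rw [hc, norm_mul, norm_mul, hu, ha', hb']
    rw [show (-((s:ℂ)/2)*I) = ((-(s/2) : ℝ) : ℂ) * I by push_cast; ring,
      show (-((t:ℂ)/2)*I) = ((-(t/2) : ℝ) : ℂ) * I by push_cast; ring,
      Complex.norm_exp_ofReal_mul_I, Complex.norm_exp_ofReal_mul_I]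
    norm_num
  refine ⟨c, s, t, x, hcabs, ?_⟩
  rw [kron_diag, CPHASE_diag, Matrix.diagonal_mul_diagonal, ← Matrix.diagonal_smul]
  rw [Matrix.diagonal_eq_diagonal_iff]
  have ha2' : a * a * u (1,0) = u (0,0) := by
    linear_combination u (1,0) * ea + u (0,0) * hn (1,0)
  have hb2' : b * b * u (0,1) = u (0,0) := by
    linear_combination u (0,1) * eb + u (0,0) * hn (0,1)
  have hx' : exp ((x:ℂ) * I) * u (0,0) = u (1,1) * ((a*a) * (b*b)) := by
    linear_combination u (0,0) * ex + (u (1,1) * ((a*a)*(b*b))) * hn (0,0)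
  intro i
  fin_cases i
  · show u (0,0) = c • (gf s 0 * gf t 0 * if ((0:Fin 2),(0:Fin 2)) = (1,1) then _ else 1)
    simp only [smul_eq_mul, if_neg (by decide : ¬((0:Fin 2),(0:Fin 2)) = ((1:Fin 2),(1:Fin 2)))]
    show u (0,0) = c * (a * b * 1)
    rw [hc]
    linear_combination (-(u (0,0) * (b * b'))) * haa' + (-(u (0,0))) * hbb'
  · show u (0,1) = c • (gf s 0 * gf t 1 * if ((0:Fin 2),(1:Fin 2)) = (1,1) then _ else 1)
    simp only [smul_eq_mul, if_neg (by decide : ¬((0:Fin 2),(1:Fin 2)) = ((1:Fin 2),(1:Fin 2)))]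
    show u (0,1) = c * (a * b' * 1)
    rw [hc]
    linear_combination (-(u (0,0) * (b' * b'))) * haa' + (-(u (0,1) * (b * b' + 1))) * hbb'
      + (b' * b') * hb2'
  · show u (1,0) = c • (gf s 1 * gf t 0 * if ((1:Fin 2),(0:Fin 2)) = (1,1) then _ else 1)
    simp only [smul_eq_mul, if_neg (by decide : ¬((1:Fin 2),(0:Fin 2)) = ((1:Fin 2),(1:Fin 2)))]
    show u (1,0) = c * (a' * b * 1)
    rw [hc]
    linear_combination (-(u (0,0) * (a' * a'))) * hbb' + (-(u (1,0) * (a * a' + 1))) * haa'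
      + (a' * a') * ha2'
  · show u (1,1) = c • (gf s 1 * gf t 1 * if ((1:Fin 2),(1:Fin 2)) = (1,1) then exp ((x:ℂ)*I) else 1)
    simp only [smul_eq_mul, if_pos rfl]
    show u (1,1) = c * (a' * b' * exp ((x:ℂ)*I))
    rw [hc]
    linear_combination (-(u (1,1) * (b*b') * (a*a'*(b*b') + 1))) * haa'
      + (-(u (1,1) * (a*a'*(b*b') + 1))) * hbb' + (-(a'*a'*(b'*b'))) * hx'

lemma four_eq (f g : F4 → F4) (h1 : f (0,0) = g (0,0)) (h2 : f (0,1) = g (0,1))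
    (h3 : f (1,0) = g (1,0)) (h4 : f (1,1) = g (1,1)) : f = g := by
  funext p; fin_cases p <;> assumption

lemma factor_of (U : Matrix F4 F4 ℂ) (f : F4 → F4) (h0 : ∀ p q, q ≠ f p → U p q = 0)
    (Q : Matrix F4 F4 ℂ) (hQ : ∀ p q, Q p q = if q = f p then 1 else 0) :
    U = Matrix.diagonal (fun p => U p (f p)) * Q := by
  ext p q
  rw [Matrix.diagonal_mul, hQ]
  by_cases h : q = f p
  · subst h; simp
  · simp [h, h0 p q h]

lemma Qe1 : ∀ p q : F4, ((1 : Matrix (Fin 2) (Fin 2) ℂ) ⊗ₖ (1 : Matrix (Fin 2) (Fin 2) ℂ)) p q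
    = if q = (fun p : F4 => (p.1, p.2)) p then 1 else 0 := by
  intro p q
  fin_cases p <;> fin_cases q <;>
    simp [Matrix.kroneckerMap_apply, Matrix.one_apply, Prod.ext_iff]
lemma Qe2 : ∀ p q : F4, ((1 : Matrix (Fin 2) (Fin 2) ℂ) ⊗ₖ Xmat) p q
    = if q = (fun p : F4 => (p.1, p.2 + 1)) p then 1 else 0 := by
  intro p q
  fin_cases p <;> fin_cases q <;>
    simp [Matrix.kroneckerMap_apply, Matrix.one_apply, Xmat, Prod.ext_iff]
lemma Qe3 : ∀ p q : F4, (Xmat ⊗ₖ (1 : Matrix (Fin 2) (Fin 2) ℂ)) p q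
    = if q = (fun p : F4 => (p.1 + 1, p.2)) p then 1 else 0 := by
  intro p q
  fin_cases p <;> fin_cases q <;>
    simp [Matrix.kroneckerMap_apply, Matrix.one_apply, Xmat, Prod.ext_iff]
lemma Qe4 : ∀ p q : F4, (Xmat ⊗ₖ Xmat) p q
    = if q = (fun p : F4 => (p.1 + 1, p.2 + 1)) p then 1 else 0 := by
  intro p q
  fin_cases p <;> fin_cases q <;>
    simp [Matrix.kroneckerMap_apply, Matrix.one_apply, Xmat, Prod.ext_iff]
lemma Qe5 : ∀ p q : F4, (SWAP * ((1 : Matrix (Fin 2) (Fin 2) ℂ) ⊗ₖ (1 : Matrix (Fin 2) (Fin 2) ℂ))) p q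
    = if q = (fun p : F4 => (p.2, p.1)) p then 1 else 0 := by
  intro p q
  fin_cases p <;> fin_cases q <;>
    simp [Matrix.mul_apply, Fintype.sum_prod_type, Fin.sum_univ_two, SWAP,
      Matrix.kroneckerMap_apply, Matrix.one_apply, Prod.ext_iff]
lemma Qe6 : ∀ p q : F4, (SWAP * ((1 : Matrix (Fin 2) (Fin 2) ℂ) ⊗ₖ Xmat)) p q
    = if q = (fun p : F4 => (p.2, p.1 + 1)) p then 1 else 0 := by
  intro p q
  fin_cases p <;> fin_cases q <;>
    simp [Matrix.mul_apply, Fintype.sum_prod_type, Fin.sum_univ_two, SWAP,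
      Matrix.kroneckerMap_apply, Matrix.one_apply, Xmat, Prod.ext_iff]
lemma Qe7 : ∀ p q : F4, (SWAP * (Xmat ⊗ₖ (1 : Matrix (Fin 2) (Fin 2) ℂ))) p q
    = if q = (fun p : F4 => (p.2 + 1, p.1)) p then 1 else 0 := by
  intro p q
  fin_cases p <;> fin_cases q <;>
    simp [Matrix.mul_apply, Fintype.sum_prod_type, Fin.sum_univ_two, SWAP,
      Matrix.kroneckerMap_apply, Matrix.one_apply, Xmat, Prod.ext_iff]
lemma Qe8 : ∀ p q : F4, (SWAP * (Xmat ⊗ₖ Xmat)) p q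
    = if q = (fun p : F4 => (p.2 + 1, p.1 + 1)) p then 1 else 0 := by
  intro p q
  fin_cases p <;> fin_cases q <;>
    simp [Matrix.mul_apply, Fintype.sum_prod_type, Fin.sum_univ_two, SWAP,
      Matrix.kroneckerMap_apply, Matrix.one_apply, Xmat, Prod.ext_iff]

lemma good_case (U : Matrix F4 F4 ℂ) (f : F4 → F4)
    (h0 : ∀ p q, q ≠ f p → U p q = 0) (habs : ∀ p, ‖U p (f p)‖ = 1)
    (σ : F4 → F4) (hfσ : f = σ)
    (Q : Matrix F4 F4 ℂ) (hQ : ∀ p q, Q p q = if q = σ p then 1 else 0)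
    (hQmem : Q ∈ QSet) :
    ∃ (c : ℂ) (s t x : ℝ) (Q : Matrix F4 F4 ℂ),
      ‖c‖ = 1 ∧ Q ∈ QSet ∧
      U = c • ((Zgate s ⊗ₖ Zgate t) * CPHASE x * Q) := by
  obtain ⟨c, s, t, x, hcabs, hd⟩ := diag_factor (fun p => U p (f p)) habs
  refine ⟨c, s, t, x, Q, hcabs, hQmem, ?_⟩
  have hQf : ∀ p q, Q p q = if q = f p then 1 else 0 := by
    intro p q; rw [hQ, hfσ]
  rw [factor_of U f h0 Q hQf, hd, smul_mul_assoc, mul_assoc]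

lemma memQ1 : ((1 : Matrix (Fin 2) (Fin 2) ℂ) ⊗ₖ (1 : Matrix (Fin 2) (Fin 2) ℂ)) ∈ QSet := by
  simp [QSet]
lemma memQ2 : ((1 : Matrix (Fin 2) (Fin 2) ℂ) ⊗ₖ Xmat) ∈ QSet := by simp [QSet]
lemma memQ3 : (Xmat ⊗ₖ (1 : Matrix (Fin 2) (Fin 2) ℂ)) ∈ QSet := by simp [QSet]
lemma memQ4 : (Xmat ⊗ₖ Xmat) ∈ QSet := by simp [QSet]
lemma memQ5 : (SWAP * ((1 : Matrix (Fin 2) (Fin 2) ℂ) ⊗ₖ (1 : Matrix (Fin 2) (Fin 2) ℂ))) ∈ QSet := by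
  simp [QSet]
lemma memQ6 : (SWAP * ((1 : Matrix (Fin 2) (Fin 2) ℂ) ⊗ₖ Xmat)) ∈ QSet := by simp [QSet]
lemma memQ7 : (SWAP * (Xmat ⊗ₖ (1 : Matrix (Fin 2) (Fin 2) ℂ))) ∈ QSet := by simp [QSet]
lemma memQ8 : (SWAP * (Xmat ⊗ₖ Xmat)) ∈ QSet := by simp [QSet]

lemma first_part (U : Matrix F4 F4 ℂ) (hUu : U ∈ Matrix.unitaryGroup F4 ℂ)
    (hpc : IsPhaseCarrier U) :
    ∃ (c : ℂ) (s t x : ℝ) (Q : Matrix F4 F4 ℂ),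
      ‖c‖ = 1 ∧ Q ∈ QSet ∧
      U = c • ((Zgate s ⊗ₖ Zgate t) * CPHASE x * Q) := by
  obtain ⟨f, hinj, h0, habs, hc1, hc2⟩ := exists_perm U hUu hpc
  obtain ⟨av, hav⟩ : ∃ v, f (0,0) = v := ⟨_, rfl⟩
  obtain ⟨bv, hbv⟩ : ∃ v, f (0,1) = v := ⟨_, rfl⟩
  have h11 : f (1,1) = cmpl av := by rw [hc1, hav]
  have h10 : f (1,0) = cmpl bv := by rw [hc2, hbv]
  have hba : bv ≠ av := fun h =>
    absurd (hinj (hbv.trans (h.trans hav.symm))) (by decide)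
  have hbca : bv ≠ cmpl av := fun h =>
    absurd (hinj (hbv.trans (h.trans h11.symm))) (by decide)
  fin_cases av <;> fin_cases bv
  · exact absurd (by decide) hba
  · exact good_case U f h0 habs (fun p => (p.1, p.2))
      (four_eq _ _ (hav.trans (by decide)) (hbv.trans (by decide))
        (h10.trans (by decide)) (h11.trans (by decide))) _ Qe1 memQ1
  · exact good_case U f h0 habs (fun p => (p.2, p.1))
      (four_eq _ _ (hav.trans (by decide)) (hbv.trans (by decide))
        (h10.trans (by decide)) (h11.trans (by decide))) _ Qe5 memQ5
  · exact absurd (by decide) hbca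
  · exact good_case U f h0 habs (fun p => (p.1, p.2 + 1))
      (four_eq _ _ (hav.trans (by decide)) (hbv.trans (by decide))
        (h10.trans (by decide)) (h11.trans (by decide))) _ Qe2 memQ2
  · exact absurd (by decide) hba
  · exact absurd (by decide) hbca
  · exact good_case U f h0 habs (fun p => (p.2, p.1 + 1))
      (four_eq _ _ (hav.trans (by decide)) (hbv.trans (by decide))
        (h10.trans (by decide)) (h11.trans (by decide))) _ Qe6 memQ6
  · exact good_case U f h0 habs (fun p => (p.2 + 1, p.1))
      (four_eq _ _ (hav.trans (by decide)) (hbv.trans (by decide))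
        (h10.trans (by decide)) (h11.trans (by decide))) _ Qe7 memQ7
  · exact absurd (by decide) hbca
  · exact absurd (by decide) hba
  · exact good_case U f h0 habs (fun p => (p.1 + 1, p.2))
      (four_eq _ _ (hav.trans (by decide)) (hbv.trans (by decide))
        (h10.trans (by decide)) (h11.trans (by decide))) _ Qe3 memQ3
  · exact absurd (by decide) hbca
  · exact good_case U f h0 habs (fun p => (p.2 + 1, p.1 + 1))
      (four_eq _ _ (hav.trans (by decide)) (hbv.trans (by decide))
        (h10.trans (by decide)) (h11.trans (by decide))) _ Qe8 memQ8
  · exact good_case U f h0 habs (fun p => (p.1 + 1, p.2 + 1))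
      (four_eq _ _ (hav.trans (by decide)) (hbv.trans (by decide))
        (h10.trans (by decide)) (h11.trans (by decide))) _ Qe4 memQ4
  · exact absurd (by decide) hba

/-! ### Second part: local equivalence -/

lemma Zgate_unitary (θ : ℝ) : Zgate θ ∈ Matrix.unitaryGroup (Fin 2) ℂ := by
  rw [Matrix.mem_unitaryGroup_iff]
  ext i j
  fin_cases i <;> fin_cases j <;>
    simp [Zgate, Matrix.mul_apply, Fin.sum_univ_two, Matrix.star_apply, Matrix.one_apply,
      ← Complex.exp_conj, _root_.map_mul, map_div₀, Complex.conj_ofReal, map_ofNat,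
      Complex.conj_I, ← Complex.exp_add]

lemma Xmat_unitary : Xmat ∈ Matrix.unitaryGroup (Fin 2) ℂ := by
  rw [Matrix.mem_unitaryGroup_iff]
  ext i j
  fin_cases i <;> fin_cases j <;>
    simp [Xmat, Matrix.mul_apply, Fin.sum_univ_two, Matrix.star_apply, Matrix.one_apply]

lemma smul_unitary {n : Type*} [DecidableEq n] [Fintype n] (c : ℂ) (hc : ‖c‖ = 1)
    {A : Matrix n n ℂ} (hA : A ∈ Matrix.unitaryGroup n ℂ) :
    c • A ∈ Matrix.unitaryGroup n ℂ := by
  rw [Matrix.mem_unitaryGroup_iff] at hA ⊢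
  rw [star_smul, smul_mul_smul_comm, hA]
  have h1 : c * star c = 1 := by
    rw [show (star c) = (starRingEnd ℂ) c from rfl, Complex.mul_conj,
      Complex.normSq_eq_norm_sq, hc]
    norm_num
  rw [h1, one_smul]

lemma kron_swap (A B : Matrix (Fin 2) (Fin 2) ℂ) :
    (A ⊗ₖ B) * SWAP = SWAP * (B ⊗ₖ A) := by
  ext p q
  fin_cases p <;> fin_cases q <;>
    simp [Matrix.mul_apply, Fintype.sum_prod_type, Fin.sum_univ_two, SWAP,
      Matrix.kroneckerMap_apply, Prod.ext_iff] <;> ring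

lemma cph_swap (x : ℝ) : CPHASE x * SWAP = SWAP * CPHASE x := by
  ext p q
  fin_cases p <;> fin_cases q <;>
    simp [Matrix.mul_apply, Fintype.sum_prod_type, Fin.sum_univ_two, SWAP, CPHASE,
      Prod.ext_iff]

lemma zz_cph (a b x : ℝ) :
    (Zgate a ⊗ₖ Zgate b) * CPHASE x = CPHASE x * (Zgate a ⊗ₖ Zgate b) := by
  rw [kron_diag, CPHASE_diag, Matrix.diagonal_mul_diagonal, Matrix.diagonal_mul_diagonal]
  rw [Matrix.diagonal_eq_diagonal_iff]
  intro i
  ring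

lemma L4 (s t x : ℝ) :
    (Zgate s ⊗ₖ Zgate t) * CPHASE x * SWAP = SWAP * CPHASE x * (Zgate t ⊗ₖ Zgate s) := by
  rw [mul_assoc, cph_swap, ← mul_assoc, kron_swap, mul_assoc, zz_cph, ← mul_assoc]

lemma noswapcase (c : ℂ) (s t x : ℝ) (P₁ P₂ : Matrix (Fin 2) (Fin 2) ℂ) :
    c • ((Zgate s ⊗ₖ Zgate t) * CPHASE x * (P₁ ⊗ₖ P₂))
      = ((c • Zgate s) ⊗ₖ Zgate t) * CPHASE x * (P₁ ⊗ₖ P₂) := by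
  rw [Matrix.smul_kronecker, smul_mul_assoc, smul_mul_assoc]

lemma swapcase (c : ℂ) (s t x : ℝ) (P₁ P₂ : Matrix (Fin 2) (Fin 2) ℂ) :
    c • ((Zgate s ⊗ₖ Zgate t) * CPHASE x * (SWAP * (P₁ ⊗ₖ P₂)))
      = ((1 : Matrix (Fin 2) (Fin 2) ℂ) ⊗ₖ (1 : Matrix (Fin 2) (Fin 2) ℂ)) *
        (SWAP * CPHASE x) * ((c • Zgate t * P₁) ⊗ₖ (Zgate s * P₂)) := by
  rw [Matrix.mul_kronecker_mul, Matrix.smul_kronecker, Matrix.one_kronecker_one, one_mul,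
    smul_mul_assoc, mul_smul_comm]
  congr 1
  rw [← mul_assoc ((Zgate s ⊗ₖ Zgate t) * CPHASE x), L4, mul_assoc (SWAP * CPHASE x)]

lemma second_of_first (U : Matrix F4 F4 ℂ)
    (h : ∃ (c : ℂ) (s t x : ℝ) (Q : Matrix F4 F4 ℂ),
      ‖c‖ = 1 ∧ Q ∈ QSet ∧
      U = c • ((Zgate s ⊗ₖ Zgate t) * CPHASE x * Q)) :
    ∃ (x : ℝ) (A B C D : Matrix (Fin 2) (Fin 2) ℂ),
      A ∈ Matrix.unitaryGroup (Fin 2) ℂ ∧ B ∈ Matrix.unitaryGroup (Fin 2) ℂ ∧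
      C ∈ Matrix.unitaryGroup (Fin 2) ℂ ∧ D ∈ Matrix.unitaryGroup (Fin 2) ℂ ∧
      (U = (A ⊗ₖ B) * CPHASE x * (C ⊗ₖ D) ∨
        U = (A ⊗ₖ B) * (SWAP * CPHASE x) * (C ⊗ₖ D)) := by
  obtain ⟨c, s, t, x, Q, hc, hmem, hUeq⟩ := h
  have hmem' : Q = ((1 : Matrix (Fin 2) (Fin 2) ℂ) ⊗ₖ (1 : Matrix (Fin 2) (Fin 2) ℂ)) ∨
      Q = ((1 : Matrix (Fin 2) (Fin 2) ℂ) ⊗ₖ Xmat) ∨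
      Q = (Xmat ⊗ₖ (1 : Matrix (Fin 2) (Fin 2) ℂ)) ∨ Q = (Xmat ⊗ₖ Xmat) ∨
      Q = (SWAP * ((1 : Matrix (Fin 2) (Fin 2) ℂ) ⊗ₖ (1 : Matrix (Fin 2) (Fin 2) ℂ))) ∨
      Q = (SWAP * ((1 : Matrix (Fin 2) (Fin 2) ℂ) ⊗ₖ Xmat)) ∨
      Q = (SWAP * (Xmat ⊗ₖ (1 : Matrix (Fin 2) (Fin 2) ℂ))) ∨
      Q = (SWAP * (Xmat ⊗ₖ Xmat)) := hmem
  clear hmem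
  rename' hmem' => hmem
  rcases hmem with rfl|rfl|rfl|rfl|rfl|rfl|rfl|rfl <;> subst hUeq
  · exact ⟨x, c • Zgate s, Zgate t, 1, 1, smul_unitary c hc (Zgate_unitary s),
      Zgate_unitary t, one_mem _, one_mem _, Or.inl (noswapcase c s t x 1 1)⟩
  · exact ⟨x, c • Zgate s, Zgate t, 1, Xmat, smul_unitary c hc (Zgate_unitary s),
      Zgate_unitary t, one_mem _, Xmat_unitary, Or.inl (noswapcase c s t x 1 Xmat)⟩
  · exact ⟨x, c • Zgate s, Zgate t, Xmat, 1, smul_unitary c hc (Zgate_unitary s),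
      Zgate_unitary t, Xmat_unitary, one_mem _, Or.inl (noswapcase c s t x Xmat 1)⟩
  · exact ⟨x, c • Zgate s, Zgate t, Xmat, Xmat, smul_unitary c hc (Zgate_unitary s),
      Zgate_unitary t, Xmat_unitary, Xmat_unitary, Or.inl (noswapcase c s t x Xmat Xmat)⟩
  · exact ⟨x, 1, 1, c • Zgate t * 1, Zgate s * 1, one_mem _, one_mem _,
      mul_mem (smul_unitary c hc (Zgate_unitary t)) (one_mem _),
      mul_mem (Zgate_unitary s) (one_mem _), Or.inr (swapcase c s t x 1 1)⟩
  · exact ⟨x, 1, 1, c • Zgate t * 1, Zgate s * Xmat, one_mem _, one_mem _,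
      mul_mem (smul_unitary c hc (Zgate_unitary t)) (one_mem _),
      mul_mem (Zgate_unitary s) Xmat_unitary, Or.inr (swapcase c s t x 1 Xmat)⟩
  · exact ⟨x, 1, 1, c • Zgate t * Xmat, Zgate s * 1, one_mem _, one_mem _,
      mul_mem (smul_unitary c hc (Zgate_unitary t)) Xmat_unitary,
      mul_mem (Zgate_unitary s) (one_mem _), Or.inr (swapcase c s t x Xmat 1)⟩
  · exact ⟨x, 1, 1, c • Zgate t * Xmat, Zgate s * Xmat, one_mem _, one_mem _,
      mul_mem (smul_unitary c hc (Zgate_unitary t)) Xmat_unitary,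
      mul_mem (Zgate_unitary s) Xmat_unitary, Or.inr (swapcase c s t x Xmat Xmat)⟩

theorem phase_carrier_classification (U : Matrix (Fin 2 × Fin 2) (Fin 2 × Fin 2) ℂ)
    (hU : U ∈ Matrix.specialUnitaryGroup (Fin 2 × Fin 2) ℂ)
    (hpc : IsPhaseCarrier U) :
    (∃ (c : ℂ) (s t x : ℝ) (Q : Matrix (Fin 2 × Fin 2) (Fin 2 × Fin 2) ℂ),
      ‖c‖ = 1 ∧
      Q ∈ ({(1 : Matrix (Fin 2) (Fin 2) ℂ) ⊗ₖ (1 : Matrix (Fin 2) (Fin 2) ℂ),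
            (1 : Matrix (Fin 2) (Fin 2) ℂ) ⊗ₖ Xmat,
            Xmat ⊗ₖ (1 : Matrix (Fin 2) (Fin 2) ℂ), Xmat ⊗ₖ Xmat,
            SWAP * ((1 : Matrix (Fin 2) (Fin 2) ℂ) ⊗ₖ (1 : Matrix (Fin 2) (Fin 2) ℂ)),
            SWAP * ((1 : Matrix (Fin 2) (Fin 2) ℂ) ⊗ₖ Xmat),
            SWAP * (Xmat ⊗ₖ (1 : Matrix (Fin 2) (Fin 2) ℂ)),
            SWAP * (Xmat ⊗ₖ Xmat)} : Set (Matrix (Fin 2 × Fin 2) (Fin 2 × Fin 2) ℂ)) ∧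
      U = c • ((Zgate s ⊗ₖ Zgate t) * CPHASE x * Q)) ∧
    (∃ (x : ℝ) (A B C D : Matrix (Fin 2) (Fin 2) ℂ),
      A ∈ Matrix.unitaryGroup (Fin 2) ℂ ∧ B ∈ Matrix.unitaryGroup (Fin 2) ℂ ∧
      C ∈ Matrix.unitaryGroup (Fin 2) ℂ ∧ D ∈ Matrix.unitaryGroup (Fin 2) ℂ ∧
      (U = (A ⊗ₖ B) * CPHASE x * (C ⊗ₖ D) ∨
        U = (A ⊗ₖ B) * (SWAP * CPHASE x) * (C ⊗ₖ D))) := by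
  have hUu : U ∈ Matrix.unitaryGroup (Fin 2 × Fin 2) ℂ :=
    (Matrix.mem_specialUnitaryGroup_iff.mp hU).1
  have h1 := first_part U hUu hpc
  exact ⟨h1, second_of_first U h1⟩
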